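/- In ℝⁿ with origin removed, M = ℝⁿ \ {0}: under the envelopments φ = identity inclusion M → ℝⁿ and φ'(x) = ((r+1)/r)·x where r = |x|, the singleton boundary set {0} of φ covers the unit sphere S^{n-1} = {x : |x| = 1}, which is a boundary set of φ'. -/
import Mathlib


open Set Topology

/-- Boundary set `B` of the envelopment `φ` covers boundary set `B'` of the
envelopment `φ'`. -/
def Covers {M MHat MHat' : Type*} [TopologicalSpace MHat] [TopologicalSpace MHat']
    (φ : M → MHat) (φ' : M → MHat') (B : Set MHat) (B' : Set MHat') : Prop :=
  ∀ U : Set MHat, IsOpen U → B ⊆ U →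
    ∃ U' : Set MHat', IsOpen U' ∧ B' ⊆ U' ∧
      φ '' (φ' ⁻¹' (U' ∩ Set.range φ')) ⊆ U

/-- `M = ℝⁿ \ {0}`: under the envelopments `φ = inclusion` and
`φ'(x) = ((|x|+1)/|x|)·x`, the singleton boundary set `{0}` of `φ` covers the
unit sphere `S^{n-1}`, a boundary set of `φ'`. -/
theorem origin_covers_unit_sphere (n : ℕ) (hn : 1 ≤ n) :
    let E := EuclideanSpace ℝ (Fin n)
    let M := {x : E // x ≠ 0}
    let φ : M → E := fun x => (x : E)
    let φ' : M → E := fun x => ((‖(x : E)‖ + 1) / ‖(x : E)‖) • (x : E)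
    Covers φ φ' ({(0 : E)} : Set E) (Metric.sphere (0 : E) 1) := by
  intro E M φ φ' U hU hB
  obtain ⟨ε, hε, hball⟩ := Metric.isOpen_iff.mp hU 0 (hB rfl)
  refine ⟨Metric.ball 0 (1 + ε), Metric.isOpen_ball, ?_, ?_⟩
  · intro y hy
    rw [Metric.mem_sphere] at hy
    rw [Metric.mem_ball, hy]
    linarith
  · rintro z ⟨x, hx, rfl⟩
    apply hball
    have hr : 0 < ‖(x : E)‖ := norm_pos_iff.mpr x.2
    have hnorm : ‖φ' x‖ = ‖(x : E)‖ + 1 := by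
      show ‖((‖(x : E)‖ + 1) / ‖(x : E)‖) • (x : E)‖ = _
      rw [norm_smul, Real.norm_eq_abs, abs_of_pos (by positivity)]
      field_simp
    have h1 : φ' x ∈ Metric.ball (0 : E) (1 + ε) := hx.1
    rw [Metric.mem_ball, dist_zero_right, hnorm] at h1
    rw [Metric.mem_ball, dist_zero_right]
    show ‖(x : E)‖ < ε
    linarith
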